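/- Logarithmic sum bound for the bias-corrected RMS terms: for every T ≥ 1, Σ_{t=1}^{T} √(n_t/(1−ν^t)) / √t ≤ √((1 + log T)/(1−ν)) · √(Σ_{t=1}^{T} g_t²). -/

import Mathlib

private lemma my_harmonic_le_one_add_log :
    ∀ T : ℕ, 1 ≤ T → ∑ t ∈ Finset.Icc 1 T, (1:ℝ) / t ≤ 1 + Real.log T := by
  intro T hT
  induction T with
  | zero => omega
  | succ T ih =>
    rcases Nat.eq_or_lt_of_le hT with h | h
    · simp [← h]
    · have hT1 : 1 ≤ T := by omega
      have hTpos : (0:ℝ) < T := by exact_mod_cast hT1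
      rw [Finset.sum_Icc_succ_top (by omega)]
      have key : (1:ℝ) / (T+1) ≤ Real.log (T+1) - Real.log T := by
        have hlog : Real.log ((T:ℝ) / (T+1)) ≤ (T:ℝ)/(T+1) - 1 :=
          Real.log_le_sub_one_of_pos (by positivity)
        rw [Real.log_div (ne_of_gt hTpos) (by positivity)] at hlog
        have : (T:ℝ)/(T+1) - 1 = -(1/(T+1)) := by field_simp; ring
        rw [this] at hlog
        linarith
      have := ih hT1
      push_cast
      push_cast at this key
      linarith

theorem rms_log_sum_bound
    (ν : ℝ) (hν : ν ∈ Set.Ico (0:ℝ) 1)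
    (g n : ℕ → ℝ)
    (hn0 : n 0 = 0)
    (hn : ∀ t, 1 ≤ t → n t = ν * n (t - 1) + (1 - ν) * (g t) ^ 2) :
    ∀ T : ℕ, 1 ≤ T →
      ∑ t ∈ Finset.Icc 1 T, Real.sqrt (n t / (1 - ν ^ t)) / Real.sqrt t ≤
        Real.sqrt ((1 + Real.log T) / (1 - ν)) *
          Real.sqrt (∑ t ∈ Finset.Icc 1 T, (g t) ^ 2) := by
  obtain ⟨hν0, hν1⟩ := hν
  have h1ν : (0:ℝ) < 1 - ν := by linarith
  -- n is nonneg
  have hnneg : ∀ t, 0 ≤ n t := by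
    intro t
    induction t with
    | zero => simp [hn0]
    | succ t ih =>
      rw [hn (t+1) (by omega)]
      simp only [Nat.add_sub_cancel]
      have : 0 ≤ (1 - ν) * (g (t+1))^2 := by positivity
      nlinarith
  -- key sum bound: ∑ n ≤ ∑ g²  (with slack term)
  have hkey : ∀ T : ℕ, ∑ t ∈ Finset.Icc 1 T, n t + ν / (1 - ν) * n T ≤
      ∑ t ∈ Finset.Icc 1 T, (g t)^2 := by
    intro T
    induction T with
    | zero => simp [hn0]
    | succ T ih =>
      rw [Finset.sum_Icc_succ_top (by omega), Finset.sum_Icc_succ_top (by omega),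
        hn (T+1) (by omega)]
      simp only [Nat.add_sub_cancel]
      have hg : 0 ≤ (g (T+1))^2 := sq_nonneg _
      have hnT := hnneg T
      have hdiv : ν / (1 - ν) * (ν * n T + (1 - ν) * g (T + 1) ^ 2)
          = ν^2/(1-ν) * n T + ν * g (T+1)^2 := by
        field_simp
      rw [hdiv]
      have h2 : ν * n T + ν^2/(1-ν) * n T ≤ ν/(1-ν) * n T := by
        have : ν * n T + ν^2/(1-ν) * n T = ν/(1-ν) * n T := by field_simp; ring
        linarith
      nlinarith
  intro T hT
  set a : ℕ → ℝ := fun t => n t / (1 - ν ^ t) with ha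
  have haneg : ∀ t ∈ Finset.Icc 1 T, 0 ≤ a t := by
    intro t ht
    have : (0:ℝ) < 1 - ν ^ t := by
      have : ν ^ t ≤ ν ^ 1 := pow_le_pow_of_le_one hν0 (le_of_lt hν1)
        (Finset.mem_Icc.mp ht).1
      simp at this; linarith
    exact div_nonneg (hnneg t) (le_of_lt this)
  -- bound on ∑ a
  have hsum_a : ∑ t ∈ Finset.Icc 1 T, a t ≤
      (∑ t ∈ Finset.Icc 1 T, (g t)^2) / (1 - ν) := by
    have h1 : ∑ t ∈ Finset.Icc 1 T, a t ≤ ∑ t ∈ Finset.Icc 1 T, n t / (1 - ν) := by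
      apply Finset.sum_le_sum
      intro t ht
      have ht1 : 1 ≤ t := (Finset.mem_Icc.mp ht).1
      have hpt : ν ^ t ≤ ν := by
        have := pow_le_pow_of_le_one hν0 (le_of_lt hν1) ht1
        simpa using this
      have hpos : (0:ℝ) < 1 - ν ^ t := by linarith
      exact div_le_div_of_nonneg_left (hnneg t) h1ν (by linarith)
    have h2 : ∑ t ∈ Finset.Icc 1 T, n t / (1 - ν)
        = (∑ t ∈ Finset.Icc 1 T, n t) / (1 - ν) := by
      rw [Finset.sum_div]
    have h3 : (∑ t ∈ Finset.Icc 1 T, n t) ≤ ∑ t ∈ Finset.Icc 1 T, (g t)^2 := by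
      have h4 : 0 ≤ ν / (1 - ν) * n T :=
        mul_nonneg (div_nonneg hν0 h1ν.le) (hnneg T)
      linarith [hkey T]
    calc ∑ t ∈ Finset.Icc 1 T, a t ≤ (∑ t ∈ Finset.Icc 1 T, n t) / (1 - ν) := by
          rw [← h2]; exact h1
      _ ≤ (∑ t ∈ Finset.Icc 1 T, (g t)^2) / (1 - ν) := by
          apply div_le_div_of_nonneg_right h3 h1ν.le
  -- Cauchy-Schwarz
  have hCS : (∑ t ∈ Finset.Icc 1 T, (1 / Real.sqrt t) * Real.sqrt (a t))^2 ≤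
      (∑ t ∈ Finset.Icc 1 T, (1 / Real.sqrt t)^2) *
        ∑ t ∈ Finset.Icc 1 T, (Real.sqrt (a t))^2 :=
    Finset.sum_mul_sq_le_sq_mul_sq _ _ _
  have h1t : ∀ t ∈ Finset.Icc 1 T, (1 / Real.sqrt t)^2 = 1 / (t:ℝ) := by
    intro t ht
    have ht1 : 1 ≤ t := (Finset.mem_Icc.mp ht).1
    have : (0:ℝ) < t := by exact_mod_cast ht1
    rw [div_pow, one_pow, Real.sq_sqrt (le_of_lt this)]
  have hat : ∀ t ∈ Finset.Icc 1 T, (Real.sqrt (a t))^2 = a t := by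
    intro t ht
    exact Real.sq_sqrt (haneg t ht)
  rw [Finset.sum_congr rfl h1t, Finset.sum_congr rfl hat] at hCS
  have hharm := my_harmonic_le_one_add_log T hT
  have hharm0 : 0 ≤ ∑ t ∈ Finset.Icc 1 T, (1:ℝ) / t := by
    apply Finset.sum_nonneg; intro t ht; positivity
  have hsum_a0 : 0 ≤ ∑ t ∈ Finset.Icc 1 T, a t :=
    Finset.sum_nonneg haneg
  have hlogT : 0 ≤ 1 + Real.log T := by linarith
  have hG0 : 0 ≤ ∑ t ∈ Finset.Icc 1 T, (g t)^2 :=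
    Finset.sum_nonneg (fun t _ => sq_nonneg _)
  have hbound : (∑ t ∈ Finset.Icc 1 T, (1 / Real.sqrt t) * Real.sqrt (a t))^2 ≤
      (1 + Real.log T) * ((∑ t ∈ Finset.Icc 1 T, (g t)^2) / (1 - ν)) := by
    calc (∑ t ∈ Finset.Icc 1 T, (1 / Real.sqrt t) * Real.sqrt (a t))^2
        ≤ (∑ t ∈ Finset.Icc 1 T, (1:ℝ) / t) * ∑ t ∈ Finset.Icc 1 T, a t := hCS
      _ ≤ (1 + Real.log T) * ((∑ t ∈ Finset.Icc 1 T, (g t)^2) / (1 - ν)) := by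
          apply mul_le_mul hharm hsum_a hsum_a0 hlogT
  have hLHS : ∑ t ∈ Finset.Icc 1 T, Real.sqrt (n t / (1 - ν ^ t)) / Real.sqrt t
      = ∑ t ∈ Finset.Icc 1 T, (1 / Real.sqrt t) * Real.sqrt (a t) := by
    apply Finset.sum_congr rfl
    intro t ht
    rw [ha]
    ring
  rw [hLHS]
  have hLHS0 : 0 ≤ ∑ t ∈ Finset.Icc 1 T, (1 / Real.sqrt t) * Real.sqrt (a t) := by
    apply Finset.sum_nonneg
    intro t ht
    have : 0 ≤ Real.sqrt (a t) := Real.sqrt_nonneg _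
    positivity
  calc ∑ t ∈ Finset.Icc 1 T, (1 / Real.sqrt t) * Real.sqrt (a t)
      = Real.sqrt ((∑ t ∈ Finset.Icc 1 T, (1 / Real.sqrt t) * Real.sqrt (a t))^2) :=
        (Real.sqrt_sq hLHS0).symm
    _ ≤ Real.sqrt ((1 + Real.log T) * ((∑ t ∈ Finset.Icc 1 T, (g t)^2) / (1 - ν))) :=
        Real.sqrt_le_sqrt hbound
    _ = Real.sqrt ((1 + Real.log T) / (1 - ν)) *
          Real.sqrt (∑ t ∈ Finset.Icc 1 T, (g t)^2) := by
        rw [← Real.sqrt_mul (div_nonneg hlogT (le_of_lt h1ν))]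
        congr 1
        field_simp
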